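/- Let f : ℕ → ℕ → ℕ satisfy (BASE3) f 3 n ≤ n − 3 for all n ≥ 3, (SIMPLEX) f d d = 0 for all d ≥ 4, (LOW) f d n ≤ f (d−1) (n−1) whenever 3 < d ≤ n < 2d, (KK) f d n ≤ f (d−1) (n−1) + 2·f d (n/2) + 2 whenever d ≥ 3 and n ≥ 2d, and (LIN) f d n ≤ 2^(d−1)·n for all n ≥ d ≥ 3. Then for all n ≥ d ≥ 3, (f d n : ℝ) ≤ (n − d)^(log₂(d−1)). -/

import Mathlib

namespace PolyhedraProofAux
open Real


private lemma rpow_logb_comm' {x y : ℝ} (hx : 0 < x) (hy : 0 < y) :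
    x ^ logb 2 y = y ^ logb 2 x := by
  rw [rpow_def_of_pos hx, rpow_def_of_pos hy, logb, logb]
  ring_nf

set_option maxHeartbeats 1000000 in
private lemma key_ineq {D m : ℝ} (hD : 4 ≤ D) (hm : D ≤ m) :
    m ^ logb 2 (D - 2) + 2 * (((m - D) / 2) ^ logb 2 (D - 1)) + 2
      ≤ m ^ logb 2 (D - 1) := by
  have hm0 : (0:ℝ) < m := by linarith
  have hD1 : (0:ℝ) < D - 1 := by linarith
  have hD2 : (0:ℝ) < D - 2 := by linarith
  have hD0 : (0:ℝ) < D := by linarith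
  set α := logb 2 (D - 1) with hαdef
  clear_value α
  set β := logb 2 (D - 2) with hβdef
  clear_value β
  have h12 : (1:ℝ) < 2 := one_lt_two
  have hα1 : 1 ≤ α := by
    rw [hαdef]
    calc (1:ℝ) = logb 2 2 := (logb_self_eq_one h12).symm
    _ ≤ logb 2 (D - 1) := logb_le_logb_of_le h12 (by norm_num) (by linarith)
  have hα0 : 0 < α := by linarith
  set L := logb 2 m with hLdef
  clear_value L
  set s := L - logb 2 D with hsdef
  clear_value s
  set q := (D - 2) / (D - 1) with hqdef
  clear_value q
  have hq0 : 0 < q := by rw [hqdef]; exact div_pos hD2 hD1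
  have hq1 : q < 1 := by rw [hqdef]; exact (div_lt_one hD1).mpr (by linarith)
  set u := q ^ s with hudef
  clear_value u
  set v := (2:ℝ) ^ (-s) with hvdef
  clear_value v
  have hs0 : 0 ≤ s := by
    rw [hsdef, sub_nonneg, hLdef]
    exact logb_le_logb_of_le h12 hD0 hm
  have hu0 : 0 < u := by rw [hudef]; exact rpow_pos_of_pos hq0 s
  have hu1 : u ≤ 1 := by rw [hudef]; exact rpow_le_one hq0.le hq1.le hs0
  have hv0 : 0 < v := by rw [hvdef]; exact rpow_pos_of_pos (by norm_num) _
  have hm2L : (2:ℝ) ^ L = m := by rw [hLdef]; exact rpow_logb (by norm_num) (by norm_num) hm0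
  have hD2L : (2:ℝ) ^ logb 2 D = D := rpow_logb (by norm_num) (by norm_num) hD0
  have h2α : (2:ℝ) ^ α = D - 1 := by rw [hαdef]; exact rpow_logb (by norm_num) (by norm_num) hD1
  have hmDs : m = D * (2:ℝ) ^ s := by
    rw [← hm2L, show L = logb 2 D + s by rw [hsdef]; ring,
      rpow_add (by norm_num), hD2L]
  have h2s : (0:ℝ) < (2:ℝ) ^ s := rpow_pos_of_pos (by norm_num) s
  have hDm : D / m = v := by
    rw [hvdef, hmDs, rpow_neg (by norm_num : (0:ℝ) ≤ 2)]
    field_simp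
  set P := m ^ α with hPdef
  clear_value P
  have hPL : P = (D - 1) ^ L := by
    rw [hPdef, hLdef, hαdef]; exact rpow_logb_comm' hm0 hD1
  have hP0 : 0 < P := by rw [hPdef]; exact rpow_pos_of_pos hm0 α
  -- middle term bound
  have hmD0 : (0:ℝ) ≤ (m - D) / 2 := by linarith
  have hstepA : ((m - D) / 2) ^ α ≤ ((m - D) / 2) * (m / 2) ^ (α - 1) := by
    have e : α = 1 + (α - 1) := by ring
    calc ((m - D) / 2) ^ α = ((m - D) / 2) ^ (1 + (α - 1)) := by rw [← e]
      _ = ((m - D) / 2) * ((m - D) / 2) ^ (α - 1) := by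
          rw [rpow_add' hmD0 (by rw [← e]; linarith), rpow_one]
      _ ≤ ((m - D) / 2) * (m / 2) ^ (α - 1) := by
          apply mul_le_mul_of_nonneg_left _ hmD0
          exact rpow_le_rpow hmD0 (by linarith) (by linarith)
  have hhalf : (m / 2) ^ (α - 1) = P / (D - 1) * (2 / m) := by
    rw [rpow_sub (by linarith : (0:ℝ) < m / 2), rpow_one,
      div_rpow hm0.le (by norm_num : (0:ℝ) ≤ 2), h2α, hPdef]
    field_simp
  have hmid : 2 * (((m - D) / 2) ^ α) ≤ 2 * (1 - v) * (P / (D - 1)) := by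
    have h1 := mul_le_mul_of_nonneg_left hstepA (by norm_num : (0:ℝ) ≤ 2)
    rw [hhalf] at h1
    have h2 : 2 * ((m - D) / 2 * (P / (D - 1) * (2 / m))) =
        2 * (1 - D / m) * (P / (D - 1)) := by
      field_simp
    rw [h2, hDm] at h1
    exact h1
  -- first term bound
  have hβb : m ^ β ≤ (D - 2) / D * u * P := by
    have h1 : m ^ β = (D - 2) ^ L := by rw [hLdef, hβdef]; exact rpow_logb_comm' hm0 hD2
    have h2 : (D - 2) ^ L = q ^ L * (D - 1) ^ L := by
      rw [← mul_rpow hq0.le hD1.le, hqdef]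
      congr 1
      field_simp
    have h3 : q ^ L = q ^ logb 2 D * u := by
      rw [hudef, ← rpow_add hq0]
      congr 1
      rw [hsdef]; ring
    have hlog4 : logb 2 (4:ℝ) = 2 := by
      have hl2 : Real.log 2 ≠ 0 := ne_of_gt (Real.log_pos h12)
      rw [Real.logb, show (4:ℝ) = 2 ^ (2:ℕ) by norm_num, Real.log_pow]
      field_simp
      norm_num
    have hlogD : (2:ℝ) ≤ logb 2 D := by
      calc (2:ℝ) = logb 2 (4:ℝ) := hlog4.symm
        _ ≤ logb 2 D := logb_le_logb_of_le h12 (by norm_num) hD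
    have h4 : q ^ logb 2 D ≤ q ^ (2:ℝ) := rpow_le_rpow_of_exponent_ge hq0 hq1.le hlogD
    have h5 : q ^ (2:ℝ) ≤ (D - 2) / D := by
      have e2 : q ^ (2:ℝ) = q * q := by
        rw [show (2:ℝ) = 1 + 1 by norm_num, rpow_add hq0, rpow_one]
      rw [e2, hqdef, div_mul_div_comm, div_le_div_iff₀ (by positivity) hD0]
      nlinarith
    have hDL0 : (0:ℝ) ≤ (D - 1) ^ L := (rpow_pos_of_pos hD1 L).le
    calc m ^ β = q ^ logb 2 D * u * (D - 1) ^ L := by rw [h1, h2, h3]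
      _ ≤ (D - 2) / D * u * (D - 1) ^ L :=
          mul_le_mul_of_nonneg_right
            (mul_le_mul_of_nonneg_right (le_trans h4 h5) hu0.le) hDL0
      _ = (D - 2) / D * u * P := by rw [hPL]
  -- constant term bound
  have h2small : (2:ℝ) ≤ 2 / D * v * P := by
    rw [← hDm]
    have hmP : m ≤ P := by
      rw [hPdef]
      nth_rewrite 1 [← rpow_one m]
      exact rpow_le_rpow_of_exponent_le (by linarith) hα1
    have he : 2 / D * (D / m) * P = 2 * P / m := by field_simp
    rw [he, le_div_iff₀ hm0]
    linarith
  -- Bernoulli step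
  have hbern : 1 - v ≤ (D - 1) * (D - 2) / 2 * (1 - u) := by
    set r := Real.log 2 / Real.log ((D - 1) / (D - 2)) with hrdef
    clear_value r
    have hRgt1 : (1:ℝ) < (D - 1) / (D - 2) := by
      rw [lt_div_iff₀ hD2]; linarith
    have hlq : 0 < Real.log ((D - 1) / (D - 2)) := Real.log_pos hRgt1
    have hr1 : 1 ≤ r := by
      rw [hrdef, le_div_iff₀ hlq, one_mul]
      apply Real.log_le_log (by positivity)
      rw [div_le_iff₀ hD2]; linarith
    have hlogq : Real.log q = -Real.log ((D - 1) / (D - 2)) := by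
      rw [hqdef, ← Real.log_inv]
      congr 1
      rw [inv_div]
    have hvur : v = u ^ r := by
      rw [hudef, ← rpow_mul hq0.le, hvdef,
        rpow_def_of_pos hq0, rpow_def_of_pos (by norm_num : (0:ℝ) < 2)]
      congr 1
      rw [hlogq, hrdef]
      field_simp
    have hB : 1 + r * (u - 1) ≤ u ^ r := by
      have := one_add_mul_self_le_rpow_one_add (by linarith : (-1:ℝ) ≤ u - 1) hr1
      simpa using this
    have hrle : r ≤ (D - 1) * (D - 2) / 2 := by
      have hlow : 1 / (D - 1) ≤ Real.log ((D - 1) / (D - 2)) := by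
        have h7 := Real.log_le_sub_one_of_pos (show (0:ℝ) < (D - 2) / (D - 1) from div_pos hD2 hD1)
        have h8 : Real.log ((D - 2) / (D - 1)) = -Real.log ((D - 1) / (D - 2)) := by
          rw [← hqdef]; exact hlogq
        have h9 : (D - 2) / (D - 1) - 1 = -(1 / (D - 1)) := by
          field_simp
          norm_num
        rw [h8, h9] at h7
        linarith
      have hlog2 : Real.log 2 ≤ 1 := by
        have := Real.log_le_sub_one_of_pos (show (0:ℝ) < 2 by norm_num)
        linarith
      rw [hrdef, div_le_iff₀ hlq]
      calc Real.log 2 ≤ 1 := hlog2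
        _ ≤ (D - 1) * (D - 2) / 2 * (1 / (D - 1)) := by
            rw [mul_one_div, le_div_iff₀ hD1]; nlinarith [sq_nonneg (D - 3)]
        _ ≤ (D - 1) * (D - 2) / 2 * Real.log ((D - 1) / (D - 2)) :=
            mul_le_mul_of_nonneg_left hlow (by nlinarith)
    have e : r * (u - 1) = -(r * (1 - u)) := by ring
    rw [e] at hB
    have h11 : r * (1 - u) ≤ (D - 1) * (D - 2) / 2 * (1 - u) :=
      mul_le_mul_of_nonneg_right hrle (by linarith)
    rw [hvur]
    linarith [hB, h11]
  -- assembly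
  have hsum : (D - 2) / D * u * P + 2 * (1 - v) * (P / (D - 1)) + 2 / D * v * P ≤ P := by
    have hX : (D - 1) * (D - 2) * u + 2 * D * (1 - v) + 2 * (D - 1) * v ≤ D * (D - 1) := by
      linarith [hbern]
    have h1 : (D - 2) / D * u * P + 2 * (1 - v) * (P / (D - 1)) + 2 / D * v * P =
        P * ((D - 1) * (D - 2) * u + 2 * D * (1 - v) + 2 * (D - 1) * v) / (D * (D - 1)) := by
      field_simp
    rw [h1, div_le_iff₀ (by positivity)]
    calc P * ((D - 1) * (D - 2) * u + 2 * D * (1 - v) + 2 * (D - 1) * v)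
        ≤ P * (D * (D - 1)) := mul_le_mul_of_nonneg_left hX hP0.le
    _ = P * (D * (D - 1)) := rfl
  linarith [hβb, hmid, h2small, hsum]

end PolyhedraProofAux

open Real PolyhedraProofAux in
/-- Sukegawa–Kitahara / Todd tail-quasipolynomial bound for polyhedra:
if `f` satisfies the Klee–Walkup 3-dimensional bound, the simplex base case,
the low-facet dimension reduction, the Kalai–Kleitman recursion, and the
linear-in-fixed-dimension bound `2^(d-1) n`, then
`f d n ≤ (n - d) ^ log₂ (d - 1)` for all `n ≥ d ≥ 3`. -/
theorem polyhedra_quasipolynomial_bound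
    (f : ℕ → ℕ → ℕ)
    (base3 : ∀ n, 3 ≤ n → f 3 n ≤ n - 3)
    (simplex : ∀ d, 4 ≤ d → f d d = 0)
    (low : ∀ d n, 3 < d → d ≤ n → n < 2 * d → f d n ≤ f (d - 1) (n - 1))
    (kk : ∀ d n, 3 ≤ d → 2 * d ≤ n →
      f d n ≤ f (d - 1) (n - 1) + 2 * f d (n / 2) + 2)
    (lin : ∀ d n, 3 ≤ d → d ≤ n → f d n ≤ 2 ^ (d - 1) * n) :
    ∀ d n, 3 ≤ d → d ≤ n →
      (f d n : ℝ) ≤ ((n : ℝ) - (d : ℝ)) ^ (Real.logb 2 ((d : ℝ) - 1)) := by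
  have h12 : (1:ℝ) < 2 := one_lt_two
  have main : ∀ k d n, d + n ≤ k → 3 ≤ d → d ≤ n →
      (f d n : ℝ) ≤ ((n : ℝ) - (d : ℝ)) ^ (Real.logb 2 ((d : ℝ) - 1)) := by
    intro k
    induction k with
    | zero => intro d n hk hd hn; omega
    | succ k ih =>
      intro d n hk hd hn
      by_cases hd3 : d = 3
      · subst hd3
        have h1 : (f 3 n : ℝ) ≤ (n : ℝ) - 3 := by
          have h2 := base3 n hn
          have h3 : ((n - 3 : ℕ) : ℝ) = (n : ℝ) - 3 := by
            have : (3:ℕ) ≤ n := hn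
            push_cast [this]
            ring
          calc (f 3 n : ℝ) ≤ ((n - 3 : ℕ) : ℝ) := by exact_mod_cast h2
            _ = (n : ℝ) - 3 := h3
        have hexp : Real.logb 2 (((3:ℕ) : ℝ) - 1) = 1 := by
          norm_num
        rw [hexp, Real.rpow_one]
        push_cast
        push_cast at h1
        linarith
      · have hd4 : 4 ≤ d := by omega
        have hD4 : (4:ℝ) ≤ (d:ℝ) := by exact_mod_cast hd4
        have hcastd : ((d - 1 : ℕ) : ℝ) = (d:ℝ) - 1 := by
          have : (1:ℕ) ≤ d := by omega
          push_cast [this]; ring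
        have hexppos : 0 < Real.logb 2 ((d:ℝ) - 1) := by
          apply logb_pos h12
          linarith
        by_cases hnd : n = d
        · subst hnd
          rw [simplex n hd4]
          rw [sub_self, Real.zero_rpow (ne_of_gt hexppos)]
          norm_num
        · have hdn : d < n := by omega
          have hcastn : ((n - 1 : ℕ) : ℝ) = (n:ℝ) - 1 := by
            have : (1:ℕ) ≤ n := by omega
            push_cast [this]; ring
          have ih1 : (f (d-1) (n-1) : ℝ) ≤ ((n:ℝ) - (d:ℝ)) ^ (Real.logb 2 ((d:ℝ) - 2)) := by
            have h5 := ih (d-1) (n-1) (by omega) (by omega) (by omega)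
            rw [hcastd, hcastn] at h5
            have e1 : (n:ℝ) - 1 - ((d:ℝ) - 1) = (n:ℝ) - (d:ℝ) := by ring
            have e2 : (d:ℝ) - 1 - 1 = (d:ℝ) - 2 := by ring
            rw [e1, e2] at h5
            exact h5
          by_cases hlow : n < 2 * d
          · -- low case
            have h6 := low d n (by omega) hn (by omega)
            have h7 : (f d n : ℝ) ≤ (f (d-1) (n-1) : ℝ) := by exact_mod_cast h6
            have h8 : ((n:ℝ) - (d:ℝ)) ^ (Real.logb 2 ((d:ℝ) - 2))
                ≤ ((n:ℝ) - (d:ℝ)) ^ (Real.logb 2 ((d:ℝ) - 1)) := by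
              apply rpow_le_rpow_of_exponent_le
              · have : (d:ℝ) + 1 ≤ (n:ℝ) := by exact_mod_cast hdn
                linarith
              · exact logb_le_logb_of_le h12 (by linarith) (by linarith)
            linarith
          · -- kk case
            have h2d : 2 * d ≤ n := by omega
            have h2D : 2 * (d:ℝ) ≤ (n:ℝ) := by exact_mod_cast h2d
            have hkk := kk d n (by omega) h2d
            have hkkR : (f d n : ℝ) ≤ (f (d-1) (n-1) : ℝ) + 2 * (f d (n/2) : ℝ) + 2 := by
              exact_mod_cast hkk
            have hdn2 : d ≤ n / 2 := by omega
            have ih2 : (f d (n/2) : ℝ) ≤ (((n/2 : ℕ):ℝ) - (d:ℝ)) ^ (Real.logb 2 ((d:ℝ) - 1)) :=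
              ih d (n/2) (by omega) hd hdn2
            have hmono : (((n/2 : ℕ):ℝ) - (d:ℝ)) ^ (Real.logb 2 ((d:ℝ) - 1))
                ≤ ((((n:ℝ) - (d:ℝ)) - (d:ℝ)) / 2) ^ (Real.logb 2 ((d:ℝ) - 1)) := by
              apply rpow_le_rpow _ _ (le_of_lt hexppos)
              · have : ((d:ℕ):ℝ) ≤ ((n/2:ℕ):ℝ) := by exact_mod_cast hdn2
                linarith
              · have := Nat.cast_div_le (α := ℝ) (m := n) (n := 2)
                push_cast at this
                linarith
            have hkey := key_ineq (D := (d:ℝ)) (m := (n:ℝ) - (d:ℝ)) hD4 (by linarith)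
            calc (f d n : ℝ) ≤ (f (d-1) (n-1) : ℝ) + 2 * (f d (n/2) : ℝ) + 2 := hkkR
              _ ≤ ((n:ℝ) - (d:ℝ)) ^ (Real.logb 2 ((d:ℝ) - 2))
                  + 2 * (((((n:ℝ) - (d:ℝ)) - (d:ℝ)) / 2) ^ (Real.logb 2 ((d:ℝ) - 1))) + 2 := by
                  have := le_trans ih2 hmono
                  linarith
              _ ≤ ((n:ℝ) - (d:ℝ)) ^ (Real.logb 2 ((d:ℝ) - 1)) := hkey
  intro d n hd hn
  exact main (d + n) d n le_rfl hd hn
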